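/- Let d ≥ 4, 0 < γ < √2 − 1, α = 3/(2(d−1)(1+γ)^4) + 1/2, β = 1/((d−1)(1+γ)^4), and g(u) = u√(1 − αu² + βu⁴). Then the least positive critical point of g is u = 1, i.e. g'(1) = 0 and g'(u) > 0 for all u ∈ (0,1). -/

import Mathlib

/-- The least positive critical point of g(u) = u√(1 − αu² + βu⁴) is u = 1:
g'(1) = 0 and g'(u) > 0 on (0,1). -/
theorem least_critical_point_of_warping
    (d : ℕ) (hd : 4 ≤ d) (γ : ℝ) (hγ0 : 0 < γ) (hγ1 : γ < Real.sqrt 2 - 1)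
    (α β : ℝ)
    (hα : α = 3 / (2 * ((d : ℝ) - 1) * (1 + γ) ^ 4) + 1 / 2)
    (hβ : β = 1 / (((d : ℝ) - 1) * (1 + γ) ^ 4))
    (g : ℝ → ℝ) (hg : ∀ u, g u = u * Real.sqrt (1 - α * u ^ 2 + β * u ^ 4)) :
    deriv g 1 = 0 ∧ ∀ u ∈ Set.Ioo (0 : ℝ) 1, 0 < deriv g u := by
  have hd4 : (4 : ℝ) ≤ (d : ℝ) := by exact_mod_cast hd
  have hγp : (1 : ℝ) < 1 + γ := by linarith
  have hpow : (1 : ℝ) < (1 + γ) ^ 4 := one_lt_pow₀ hγp (by norm_num)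
  have hX : (3 : ℝ) < ((d : ℝ) - 1) * (1 + γ) ^ 4 := by nlinarith
  have hXpos : (0 : ℝ) < ((d : ℝ) - 1) * (1 + γ) ^ 4 := by linarith
  have hβpos : 0 < β := by rw [hβ]; positivity
  have h3β : 3 * β < 1 := by
    rw [hβ, mul_one_div, div_lt_one hXpos]; linarith
  have hα' : α = 3 / 2 * β + 1 / 2 := by
    have h2X : 2 * ((d : ℝ) - 1) * (1 + γ) ^ 4 = 2 * (((d : ℝ) - 1) * (1 + γ) ^ 4) := by ring
    rw [hα, hβ, h2X, div_mul_eq_div_mul_one_div]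
  have hαlt : α < 1 := by rw [hα']; linarith
  -- the key derivative formula
  have key : ∀ u : ℝ, 0 < 1 - α * u ^ 2 + β * u ^ 4 →
      HasDerivAt g ((1 - 2 * α * u ^ 2 + 3 * β * u ^ 4) /
        Real.sqrt (1 - α * u ^ 2 + β * u ^ 4)) u := by
    intro u hu
    have hgfun : g = fun u => u * Real.sqrt (1 - α * u ^ 2 + β * u ^ 4) := funext hg
    have h1 : HasDerivAt (fun u : ℝ => u ^ 2) (2 * u) u := by
      simpa using hasDerivAt_pow 2 u
    have h2 : HasDerivAt (fun u : ℝ => u ^ 4) (4 * u ^ 3) u := by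
      simpa using hasDerivAt_pow 4 u
    have hf : HasDerivAt (fun u : ℝ => 1 - α * u ^ 2 + β * u ^ 4)
        (-(α * (2 * u)) + β * (4 * u ^ 3)) u := by
      simpa using (((h1.const_mul α).const_sub 1).fun_add (h2.const_mul β))
    have hs := hf.sqrt (ne_of_gt hu)
    have hprod := (hasDerivAt_id' u).fun_mul hs
    rw [hgfun]
    refine hprod.congr_deriv ?_
    have hsq : Real.sqrt (1 - α * u ^ 2 + β * u ^ 4) ^ 2 = 1 - α * u ^ 2 + β * u ^ 4 :=
      Real.sq_sqrt hu.le
    have hsne : Real.sqrt (1 - α * u ^ 2 + β * u ^ 4) ≠ 0 :=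
      ne_of_gt (Real.sqrt_pos.mpr hu)
    generalize Real.sqrt (1 - α * u ^ 2 + β * u ^ 4) = s at hsq hsne ⊢
    field_simp
    linear_combination (2 : ℝ) * hsq
  constructor
  · have hpos1 : 0 < 1 - α * (1 : ℝ) ^ 2 + β * (1 : ℝ) ^ 4 := by nlinarith
    rw [(key 1 hpos1).deriv]
    have : 1 - 2 * α * (1 : ℝ) ^ 2 + 3 * β * (1 : ℝ) ^ 4 = 0 := by
      rw [hα']; ring
    rw [this, zero_div]
  · rintro u ⟨hu0, hu1⟩
    have hu2 : u ^ 2 < 1 := by nlinarith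
    have hpos : 0 < 1 - α * u ^ 2 + β * u ^ 4 := by
      nlinarith [mul_pos (sub_pos.mpr hαlt) (pow_pos hu0 2), mul_pos hβpos (pow_pos hu0 4)]
    rw [(key u hpos).deriv]
    have hN : 0 < 1 - 2 * α * u ^ 2 + 3 * β * u ^ 4 := by
      have : 1 - 2 * α * u ^ 2 + 3 * β * u ^ 4 = (1 - u ^ 2) * (1 - 3 * β * u ^ 2) := by
        rw [hα']; ring
      rw [this]
      have h3βu : 3 * β * u ^ 2 < 1 := by nlinarith
      nlinarith
    exact div_pos hN (Real.sqrt_pos.mpr hpos)
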